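/- Let X be a random variable with finite support contained in (−1, ∞) and E[X] > 0. Then there exists b ∈ (0, 1/2] such that E[ln(1 + b·X)] > 0. -/

import Mathlib

open Finset

/-- If the round return has strictly positive mean (and values `> -1`), then some
bet fraction `b ∈ (0, 1/2]` yields strictly positive expected log-utility. -/
theorem exists_pos_bet_of_pos_mean
    (R : Finset ℝ) (p : ℝ → ℝ)
    (hR : ∀ x ∈ R, -1 < x)
    (hp : ∀ x ∈ R, 0 ≤ p x) (hsum : ∑ x ∈ R, p x = 1)
    (hmean : 0 < ∑ x ∈ R, p x * x) :
    ∃ b ∈ Set.Ioc (0 : ℝ) (1/2), 0 < ∑ x ∈ R, p x * Real.log (1 + b * x) := by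
  set f : ℝ → ℝ := fun b => ∑ x ∈ R, p x * Real.log (1 + b * x) with hf
  have hf0 : f 0 = 0 := by simp [hf]
  have hderiv : HasDerivAt f (∑ x ∈ R, p x * x) 0 := by
    have : HasDerivAt f (∑ x ∈ R, p x * ((1 + 0 * x)⁻¹ * x)) 0 := by
      apply HasDerivAt.fun_sum
      intro x hx
      have h1 : HasDerivAt (fun b : ℝ => 1 + b * x) x 0 := by
        simpa using ((hasDerivAt_id (0:ℝ)).mul_const x).const_add 1
      have hne : (1 : ℝ) + 0 * x ≠ 0 := by norm_num
      simpa [Function.comp] using ((Real.hasDerivAt_log hne).comp 0 h1).const_mul (p x)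
    simpa using this
  have htend : Filter.Tendsto (slope f 0) (nhdsWithin 0 (Set.Ioi 0)) (nhds (∑ x ∈ R, p x * x)) := by
    have := hasDerivAt_iff_tendsto_slope.mp hderiv
    exact this.mono_left (nhdsWithin_mono 0 (fun y hy => ne_of_gt hy))
  have hev : ∀ᶠ b in nhdsWithin 0 (Set.Ioi 0), 0 < slope f 0 b :=
    htend.eventually (eventually_gt_nhds hmean)
  have hIoc : Set.Ioc (0:ℝ) (1/2) ∈ nhdsWithin (0:ℝ) (Set.Ioi 0) :=
    Ioc_mem_nhdsGT_of_mem (by norm_num : (0:ℝ) ∈ Set.Ico (0:ℝ) (1/2))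
  have := (hev.and (Filter.eventually_of_mem hIoc (fun b hb => hb))).exists
  obtain ⟨b, hslope, hb⟩ := this
  refine ⟨b, hb, ?_⟩
  have hb0 : 0 < b := hb.1
  have : 0 < (f b - f 0) / (b - 0) := by
    simpa [slope_def_field, div_eq_iff] using hslope
  have := mul_pos this (by simpa using hb0 : (0:ℝ) < b - 0)
  rw [div_mul_cancel₀] at this
  · simpa [hf0] using this
  · simpa using ne_of_gt hb0
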